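/- Every injective group endomorphism ψ of a finitely generated abelian group A has image of finite index in A, i.e. [A : ψ(A)] < ∞. -/

import Mathlib

/-- Auxiliary lemma: if `f` is an injective endomorphism of a finitely generated
additive commutative group `M`, then every element of `M` has a positive
multiple lying in the range of `f`. -/
lemma exists_nsmul_mem_range_of_injective (M : Type*) [AddCommGroup M]
    [AddGroup.FG M] (f : M →+ M) (hf : Function.Injective f) (x : M) :
    ∃ k : ℕ, 0 < k ∧ k • x ∈ f.range := by
  classical
  haveI : Module.Finite ℤ M := Module.Finite.iff_addGroup_fg.mpr inferInstance
  set g : M →ₗ[ℤ] M := f.toIntLinearMap with hg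
  set T : Submodule ℤ M := Submodule.torsion ℤ M with hT
  -- `g` maps torsion into torsion
  have hmap : T ≤ T.comap g := by
    intro m hm
    rw [hT, Submodule.mem_torsion_iff] at hm
    obtain ⟨a, ha⟩ := hm
    refine Submodule.mem_comap.mpr ?_
    rw [hT, Submodule.mem_torsion_iff]
    refine ⟨a, ?_⟩
    rw [Submonoid.smul_def] at ha ⊢
    rw [← g.map_smul, ha, g.map_zero]
  set gbar := T.mapQ T g hmap with hgbar
  have hbar : Function.Injective gbar := by
    rw [← LinearMap.ker_eq_bot, eq_bot_iff]
    intro z hz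
    obtain ⟨m, rfl⟩ := T.mkQ_surjective z
    have hz' : T.mkQ (g m) = 0 := by
      simpa [hgbar, Submodule.mapQ_apply] using hz
    rw [Submodule.mkQ_apply, Submodule.Quotient.mk_eq_zero] at hz'
    rw [hT, Submodule.mem_torsion_iff] at hz'
    obtain ⟨a, ha⟩ := hz'
    rw [Submonoid.smul_def] at ha
    have h1 : g ((a : ℤ) • m) = 0 := by rw [g.map_smul]; exact ha
    have hm0 : (a : ℤ) • m = 0 := hf (show f ((a : ℤ) • m) = f 0 by rw [f.map_zero]; exact h1)
    have hmT : m ∈ T := by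
      rw [hT, Submodule.mem_torsion_iff]
      exact ⟨a, by rw [Submonoid.smul_def]; exact hm0⟩
    simp [Submodule.mkQ_apply, Submodule.Quotient.mk_eq_zero, hmT]
  -- the quotient by torsion is a finite free ℤ-module
  haveI : Module.Free ℤ (M ⧸ T) := Module.free_of_finite_type_torsion_free'
  set ι := Module.Free.ChooseBasisIndex ℤ (M ⧸ T) with hι
  let b : Module.Basis ι ℤ (M ⧸ T) := Module.Free.chooseBasis ℤ (M ⧸ T)
  let e : (M ⧸ T) ≃ₗ[ℤ] (ι → ℤ) := b.equivFun
  set N' : Submodule ℤ (ι → ℤ) := (LinearMap.range gbar).map (e : (M ⧸ T) →ₗ[ℤ] (ι → ℤ))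
    with hN'
  have hNequiv : Nonempty (N' ≃ₗ[ℤ] (ι → ℤ)) :=
    ⟨((e.submoduleMap (LinearMap.range gbar)).symm.trans
      (LinearEquiv.ofInjective gbar hbar).symm).trans e⟩
  have hidx' : N'.toAddSubgroup.index ≠ 0 :=
    Int.submodule_toAddSubgroup_index_ne_zero_iff.mpr hNequiv
  have hidx : (LinearMap.range gbar).toAddSubgroup.index ≠ 0 := by
    have hcomap : (LinearMap.range gbar).toAddSubgroup =
        N'.toAddSubgroup.comap (e : (M ⧸ T) →+ (ι → ℤ)) := by
      ext z
      simp only [Submodule.mem_toAddSubgroup, AddSubgroup.mem_comap, hN', Submodule.mem_map]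
      constructor
      · intro hz; exact ⟨z, hz, rfl⟩
      · rintro ⟨w, hw, hwz⟩
        have : w = z := e.injective hwz
        rwa [← this]
    rw [hcomap, AddSubgroup.index_comap_of_surjective _ e.surjective]
    exact hidx'
  haveI : (LinearMap.range gbar).toAddSubgroup.FiniteIndex := ⟨hidx⟩
  -- hence the image of `x` in the quotient has finite additive order
  set y : (M ⧸ T) ⧸ (LinearMap.range gbar).toAddSubgroup :=
    QuotientAddGroup.mk (T.mkQ x) with hy
  have hyfin : IsOfFinAddOrder y := isOfFinAddOrder_of_finite y
  obtain ⟨n, hn, hny⟩ := hyfin.exists_nsmul_eq_zero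
  have hmem : n • (T.mkQ x) ∈ (LinearMap.range gbar).toAddSubgroup := by
    rwa [hy, ← QuotientAddGroup.mk_nsmul, QuotientAddGroup.eq_zero_iff] at hny
  rw [Submodule.mem_toAddSubgroup] at hmem
  obtain ⟨w, hw⟩ := hmem
  obtain ⟨c, rfl⟩ := T.mkQ_surjective w
  have hw' : T.mkQ (g c) = n • T.mkQ x := by
    rw [← hw, hgbar]
    simp [Submodule.mapQ_apply]
  have h5 : T.mkQ (n • x) = T.mkQ (g c) := by rw [map_nsmul, hw']
  have hmemT : n • x - g c ∈ T := by
    have := (Submodule.Quotient.eq T).mp h5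
    simpa using this
  rw [hT, Submodule.mem_torsion_iff] at hmemT
  obtain ⟨a, ha⟩ := hmemT
  rw [Submonoid.smul_def] at ha
  -- now work purely with `f` and `zsmul`
  have ha2 : (a : ℤ) • (n • x - f c) = 0 := ha
  have h3 : (a : ℤ) • (n • x) = (a : ℤ) • f c := by
    rw [zsmul_sub] at ha2
    exact sub_eq_zero.mp ha2
  have h4 : ((a : ℤ) * n) • x = f ((a : ℤ) • c) := by
    rw [AddMonoidHom.map_zsmul, ← h3, mul_zsmul, natCast_zsmul]
  have hane : (a : ℤ) ≠ 0 := nonZeroDivisors.coe_ne_zero a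
  refine ⟨((a : ℤ) * n).natAbs, ?_, ?_⟩
  · exact Int.natAbs_pos.mpr (mul_ne_zero hane (by exact_mod_cast hn.ne'))
  · rcases Int.natAbs_eq ((a : ℤ) * n) with h | h
    · have h6 : ((((a : ℤ) * n).natAbs : ℤ)) • x = f ((a : ℤ) • c) := by rw [← h]; exact h4
      rw [natCast_zsmul] at h6
      exact ⟨_, h6.symm⟩
    · have h6 : ((((a : ℤ) * n).natAbs : ℤ)) • x = f (-((a : ℤ) • c)) := by
        have h8 : ((((a : ℤ) * n).natAbs : ℤ)) = -((a : ℤ) * n) := by omega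
        rw [f.map_neg, ← h4, ← neg_zsmul, ← h8]
      rw [natCast_zsmul] at h6
      exact ⟨_, h6.symm⟩

/-- Every injective endomorphism `ψ` of a finitely generated
abelian group `A` has image of finite index in `A`. -/
theorem injective_endo_finite_index (A : Type*) [CommGroup A] [Group.FG A]
    (ψ : A →* A) (hψ : Function.Injective ψ) :
    ψ.range.FiniteIndex := by
  have : Finite (A ⧸ ψ.range) := by
    apply CommGroup.finite_of_fg_torsion
    intro q
    obtain ⟨a, rfl⟩ := QuotientGroup.mk_surjective q
    set f : Additive A →+ Additive A := MonoidHom.toAdditive ψ with hfdef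
    have hfinj : Function.Injective f := hψ
    obtain ⟨k, hk, m, hm⟩ :=
      exists_nsmul_mem_range_of_injective (Additive A) f hfinj (Additive.ofMul a)
    have hpow : (k : ℕ) • Additive.ofMul a = Additive.ofMul (a ^ k) := (ofMul_pow k a).symm
    have hak : a ^ k ∈ ψ.range := by
      refine ⟨m.toMul, ?_⟩
      have h3 : Additive.ofMul (ψ m.toMul) = Additive.ofMul (a ^ k) := by
        rw [← hpow, ← hm]; rfl
      exact Additive.ofMul.injective h3
    refine isOfFinOrder_iff_pow_eq_one.mpr ⟨k, hk, ?_⟩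
    rw [← QuotientGroup.mk_pow, QuotientGroup.eq_one_iff]
    exact hak
  exact Subgroup.finiteIndex_of_finite_quotient
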